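/- For any pair of POVMs (A,B) on ℂ^d with finite outcome sets, the set S = {η ∈ [0,1] : there exists a pair of POVMs (C,D) such that η·(A,B) + (1−η)·(C,D) is compatible} is a closed interval of the form [0, η^g(A,B)]; in particular S is nonempty (it contains 0), downward closed, and contains its supremum. -/

import Mathlib

open Matrix Complex Finset
open scoped ComplexOrder

noncomputable section

/-- A POVM: positive semidefinite effects summing to the identity. -/
def IsPOVM {d : ℕ} {X : Type} [Fintype X] (A : X → Matrix (Fin d) (Fin d) ℂ) : Prop :=
  (∀ x, (A x).PosSemidef) ∧ ∑ x, A x = 1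

/-- Compatibility: existence of a joint POVM with the given margins. -/
def Compatible {d : ℕ} {X Y : Type} [Fintype X] [Fintype Y]
    (A : X → Matrix (Fin d) (Fin d) ℂ) (B : Y → Matrix (Fin d) (Fin d) ℂ) : Prop :=
  ∃ J : X × Y → Matrix (Fin d) (Fin d) ℂ, IsPOVM J ∧
    (∀ x, A x = ∑ y, J (x, y)) ∧ (∀ y, B y = ∑ x, J (x, y))

/-- The generalized incompatibility robustness. -/
def etaG {d : ℕ} {X Y : Type} [Fintype X] [Fintype Y]
    (A : X → Matrix (Fin d) (Fin d) ℂ) (B : Y → Matrix (Fin d) (Fin d) ℂ) : ℝ :=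
  sSup {η : ℝ | η ∈ Set.Icc 0 1 ∧ ∃ C D, IsPOVM C ∧ IsPOVM D ∧
    Compatible (fun x => (η : ℂ) • A x + ((1 - η : ℝ) : ℂ) • C x)
      (fun y => (η : ℂ) • B y + ((1 - η : ℝ) : ℂ) • D y)}

/-- The feasible set of visibilities in the definition of the robustness. -/
def feasible {d : ℕ} {X Y : Type} [Fintype X] [Fintype Y]
    (A : X → Matrix (Fin d) (Fin d) ℂ) (B : Y → Matrix (Fin d) (Fin d) ℂ) : Set ℝ :=
  {η : ℝ | η ∈ Set.Icc 0 1 ∧ ∃ C D, IsPOVM C ∧ IsPOVM D ∧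
    Compatible (fun x => (η : ℂ) • A x + ((1 - η : ℝ) : ℂ) • C x)
      (fun y => (η : ℂ) • B y + ((1 - η : ℝ) : ℂ) • D y)}

lemma psd_real_smul {d : ℕ} {M : Matrix (Fin d) (Fin d) ℂ} (h : M.PosSemidef)
    {c : ℝ} (hc : 0 ≤ c) : ((c : ℂ) • M).PosSemidef := by
  rw [posSemidef_iff_dotProduct_mulVec]
  constructor
  · unfold Matrix.IsHermitian
    rw [conjTranspose_smul, h.isHermitian.eq]; simp
  · intro v
    rw [smul_mulVec, dotProduct_smul]
    exact smul_nonneg (by exact_mod_cast hc) (h.dotProduct_mulVec_nonneg v)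

lemma sum_const_smul_one {d : ℕ} {X : Type} [Fintype X] (c : ℝ) :
    ∑ _x : X, ((c:ℂ) • (1 : Matrix (Fin d) (Fin d) ℂ)) = ((Fintype.card X * c : ℝ) : ℂ) • 1 := by
  rw [Finset.sum_const, Finset.card_univ, ← Nat.cast_smul_eq_nsmul ℂ, smul_smul]
  push_cast; ring_nf

lemma trivPOVM {d : ℕ} {X : Type} [Fintype X] [Nonempty X] :
    IsPOVM (fun _ : X => (((Fintype.card X : ℝ)⁻¹ : ℝ) : ℂ) • (1 : Matrix (Fin d) (Fin d) ℂ)) := by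
  have hc : (0:ℝ) < (Fintype.card X : ℝ) := by exact_mod_cast Fintype.card_pos
  refine ⟨fun _ => psd_real_smul Matrix.PosSemidef.one (by positivity), ?_⟩
  rw [sum_const_smul_one, mul_inv_cancel₀ hc.ne']; simp

lemma zero_mem_feasible {d : ℕ} {X Y : Type} [Fintype X] [Fintype Y] [Nonempty X] [Nonempty Y]
    (A : X → Matrix (Fin d) (Fin d) ℂ) (B : Y → Matrix (Fin d) (Fin d) ℂ) :
    (0 : ℝ) ∈ feasible A B := by
  have hX : (0:ℝ) < (Fintype.card X : ℝ) := by exact_mod_cast Fintype.card_pos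
  have hY : (0:ℝ) < (Fintype.card Y : ℝ) := by exact_mod_cast Fintype.card_pos
  have hX' : ((Fintype.card X : ℝ) : ℂ) ≠ 0 := by exact_mod_cast hX.ne'
  have hY' : ((Fintype.card Y : ℝ) : ℂ) ≠ 0 := by exact_mod_cast hY.ne'
  refine ⟨by simp, _, _, trivPOVM, trivPOVM,
    ⟨fun _ => ((((Fintype.card X : ℝ)⁻¹ * (Fintype.card Y : ℝ)⁻¹ : ℝ)) : ℂ) • 1, ?_, ?_, ?_⟩⟩
  · refine ⟨fun _ => psd_real_smul Matrix.PosSemidef.one (by positivity), ?_⟩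
    rw [Fintype.sum_prod_type]
    simp only [Finset.sum_const, Finset.card_univ]
    match_scalars
    push_cast
    field_simp
  · intro x
    simp only [Finset.sum_const, Finset.card_univ]
    match_scalars <;> (push_cast; field_simp)
    all_goals norm_num
  · intro y
    simp only [Finset.sum_const, Finset.card_univ]
    match_scalars <;> (push_cast; field_simp)
    all_goals norm_num

lemma feasible_down {d : ℕ} {X Y : Type} [Fintype X] [Fintype Y] [Nonempty X] [Nonempty Y]
    {A : X → Matrix (Fin d) (Fin d) ℂ} {B : Y → Matrix (Fin d) (Fin d) ℂ}
    {η η' : ℝ} (h : η ∈ feasible A B) (h0 : 0 ≤ η') (h1 : η' ≤ η) : η' ∈ feasible A B := by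
  obtain ⟨⟨hη0, hη1⟩, C, D, hC, hD, J, hJ, hJX, hJY⟩ := h
  rcases eq_or_lt_of_le h1 with rfl | hlt
  · exact ⟨⟨h0, hη1⟩, C, D, hC, hD, J, hJ, hJX, hJY⟩
  have hηpos : 0 < η := lt_of_le_of_lt h0 hlt
  have hb1 : η' < 1 := lt_of_lt_of_le hlt hη1
  have ht : 0 < 1 - η' := by linarith
  have hs : 0 ≤ 1 - η := by linarith
  have hX : (0:ℝ) < (Fintype.card X : ℝ) := by exact_mod_cast Fintype.card_pos
  have hY : (0:ℝ) < (Fintype.card Y : ℝ) := by exact_mod_cast Fintype.card_pos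
  obtain ⟨l, hl0, hl1, hlη⟩ : ∃ l : ℝ, 0 ≤ l ∧ l ≤ 1 ∧ l * η = η' :=
    ⟨η'/η, div_nonneg h0 hηpos.le, le_of_lt ((div_lt_one hηpos).2 hlt),
      div_mul_cancel₀ _ hηpos.ne'⟩
  obtain ⟨μ, hμ0, hμ⟩ : ∃ μ : ℝ, 0 ≤ μ ∧ μ * (1 - η') = 1 :=
    ⟨(1-η')⁻¹, inv_nonneg.2 ht.le, inv_mul_cancel₀ ht.ne'⟩
  obtain ⟨cX, hcX0, hcX1⟩ : ∃ c : ℝ, 0 ≤ c ∧ (Fintype.card X : ℝ) * c = 1 :=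
    ⟨(Fintype.card X : ℝ)⁻¹, by positivity, mul_inv_cancel₀ hX.ne'⟩
  obtain ⟨cY, hcY0, hcY1⟩ : ∃ c : ℝ, 0 ≤ c ∧ (Fintype.card Y : ℝ) * c = 1 :=
    ⟨(Fintype.card Y : ℝ)⁻¹, by positivity, mul_inv_cancel₀ hY.ne'⟩
  have k1 : 0 ≤ μ * (l * (1-η)) := mul_nonneg hμ0 (mul_nonneg hl0 hs)
  have k2X : 0 ≤ μ * ((1-l) * cX) := mul_nonneg hμ0 (mul_nonneg (by linarith) hcX0)
  have k2Y : 0 ≤ μ * ((1-l) * cY) := mul_nonneg hμ0 (mul_nonneg (by linarith) hcY0)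
  have k3 : 0 ≤ (1-l) * (cX * cY) := mul_nonneg (by linarith) (mul_nonneg hcX0 hcY0)
  refine ⟨⟨h0, by linarith⟩,
    (fun x => ((μ * (l * (1-η)) : ℝ) : ℂ) • C x + ((μ * ((1-l) * cX) : ℝ) : ℂ) • 1),
    (fun y => ((μ * (l * (1-η)) : ℝ) : ℂ) • D y + ((μ * ((1-l) * cY) : ℝ) : ℂ) • 1),
    ⟨fun x => (psd_real_smul (hC.1 x) k1).add (psd_real_smul Matrix.PosSemidef.one k2X), ?_⟩,
    ⟨fun y => (psd_real_smul (hD.1 y) k1).add (psd_real_smul Matrix.PosSemidef.one k2Y), ?_⟩,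
    ⟨fun p => ((l : ℝ) : ℂ) • J p + (((1-l) * (cX * cY) : ℝ) : ℂ) • 1,
      ⟨fun p => (psd_real_smul (hJ.1 p) hl0).add (psd_real_smul Matrix.PosSemidef.one k3), ?_⟩,
      ?_, ?_⟩⟩
  · rw [Finset.sum_add_distrib, ← Finset.smul_sum, hC.2]
    simp only [Finset.sum_const, Finset.card_univ]
    match_scalars
    norm_cast
    linear_combination μ*(1-l)*hcX1 - μ*hlη + hμ
  · rw [Finset.sum_add_distrib, ← Finset.smul_sum, hD.2]
    simp only [Finset.sum_const, Finset.card_univ]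
    match_scalars
    norm_cast
    linear_combination μ*(1-l)*hcY1 - μ*hlη + hμ
  · rw [Finset.sum_add_distrib, ← Finset.smul_sum, hJ.2]
    simp only [Finset.sum_const, Finset.card_univ, Fintype.card_prod]
    match_scalars
    norm_cast
    push_cast
    linear_combination (1-l)*(Fintype.card X : ℝ)*cX*hcY1 + (1-l)*hcX1
  · intro x
    rw [Finset.sum_add_distrib, ← Finset.smul_sum, ← hJX x]
    simp only [Finset.sum_const, Finset.card_univ]
    match_scalars <;> norm_cast
    · linear_combination -hlη
    · linear_combination l*(1-η)*hμ
    · linear_combination (1-l)*cX*hμ - (1-l)*cX*hcY1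
  · intro y
    rw [Finset.sum_add_distrib, ← Finset.smul_sum, ← hJY y]
    simp only [Finset.sum_const, Finset.card_univ]
    match_scalars <;> norm_cast
    · linear_combination -hlη
    · linear_combination l*(1-η)*hμ
    · linear_combination (1-l)*cY*hμ - (1-l)*cY*hcX1

lemma isClosed_nonnegC : IsClosed {z : ℂ | 0 ≤ z} := by
  have : {z : ℂ | 0 ≤ z} = Complex.re ⁻¹' (Set.Ici 0) ∩ Complex.im ⁻¹' {0} := by
    ext z
    simp [Complex.le_def, eq_comm]
  rw [this]
  exact (isClosed_Ici.preimage Complex.continuous_re).inter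
    (isClosed_singleton.preimage Complex.continuous_im)

lemma isClosed_psd {d : ℕ} : IsClosed {M : Matrix (Fin d) (Fin d) ℂ | M.PosSemidef} := by
  have : {M : Matrix (Fin d) (Fin d) ℂ | M.PosSemidef} =
      {M : Matrix (Fin d) (Fin d) ℂ | Mᴴ = M} ∩
        ⋂ v : Fin d → ℂ, {M | 0 ≤ star v ⬝ᵥ M *ᵥ v} := by
    ext M
    simp only [Set.mem_setOf_eq, Set.mem_inter_iff, Set.mem_iInter]
    exact posSemidef_iff_dotProduct_mulVec
  rw [this]
  refine (isClosed_eq (continuous_id.matrix_conjTranspose) continuous_id).inter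
    (isClosed_iInter fun v => ?_)
  have hcont : Continuous fun M : Matrix (Fin d) (Fin d) ℂ => star v ⬝ᵥ M *ᵥ v :=
    (continuous_const : Continuous fun _ : Matrix (Fin d) (Fin d) ℂ => star v).dotProduct
      ((continuous_id : Continuous fun M : Matrix (Fin d) (Fin d) ℂ => M).matrix_mulVec
        continuous_const)
  exact isClosed_nonnegC.preimage hcont

lemma star_pi_single {d : ℕ} (k : Fin d) (c : ℂ) :
    star (Pi.single k c : Fin d → ℂ) = Pi.single k (star c) := by
  ext m
  rcases eq_or_ne m k with rfl | hm
  · simp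
  · simp [Pi.single_eq_of_ne hm]

lemma quad_eval {d : ℕ} (M : Matrix (Fin d) (Fin d) ℂ) (i j : Fin d) (a b : ℂ) :
    star (Pi.single i a + Pi.single j b) ⬝ᵥ M *ᵥ (Pi.single i a + Pi.single j b)
    = star a * M i i * a + star a * M i j * b + star b * M j i * a + star b * M j j * b := by
  rw [star_add, star_pi_single, star_pi_single, mulVec_add, mulVec_single, mulVec_single]
  simp only [add_dotProduct, dotProduct_add, single_dotProduct]
  simp only [Pi.smul_apply, Matrix.col_apply, MulOpposite.smul_eq_mul_unop, MulOpposite.unop_op]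
  ring

lemma diag_nonneg {d : ℕ} {M : Matrix (Fin d) (Fin d) ℂ} (h : M.PosSemidef) (i : Fin d) :
    0 ≤ M i i := by
  have := h.dotProduct_mulVec_nonneg (Pi.single i 1)
  rwa [star_pi_single, mulVec_single_one, single_dotProduct, star_one, one_mul, Matrix.col_apply] at this

lemma entry_bound {d : ℕ} {M : Matrix (Fin d) (Fin d) ℂ} (h : M.PosSemidef) (i j : Fin d) :
    ‖M i j‖ ≤ ((M i i).re + (M j j).re) / 2 := by
  rcases eq_or_ne i j with rfl | hij
  · have h0 := diag_nonneg h i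
    rw [Complex.le_def] at h0
    have : ‖M i i‖ = (M i i).re := by
      rw [Complex.norm_def, Complex.normSq_apply, ← h0.2]
      simp only [Complex.zero_im, mul_zero, add_zero]
      rw [show (M i i).re * (M i i).re = (M i i).re ^ 2 by ring, Real.sqrt_sq]
      simpa using h0.1
    rw [this]
    simp only [Complex.zero_re] at h0
    linarith [h0.1]
  · rcases eq_or_ne (M i j) 0 with hz | hz
    · rw [hz]
      simp only [norm_zero]
      have h1 := diag_nonneg h i
      have h2 := diag_nonneg h j
      rw [Complex.le_def] at h1 h2
      simp only [Complex.zero_re] at h1 h2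
      linarith [h1.1, h2.1]
    · set r : ℝ := ‖M i j‖ with hr
      have hrpos : 0 < r := by simpa [hr] using hz
      have hrne : (r:ℂ) ≠ 0 := by exact_mod_cast hrpos.ne'
      set a : ℂ := -(M i j) / r with ha
      have key := h.dotProduct_mulVec_nonneg (Pi.single i a + Pi.single j 1)
      rw [quad_eval M i j a 1] at key
      have hji : M j i = star (M i j) := by rw [← h.isHermitian.apply i j, star_star]
      have hnorm : (starRingEnd ℂ) (M i j) * M i j = ((r:ℂ))^2 := by
        rw [mul_comm, Complex.mul_conj]
        norm_cast
        exact (Complex.sq_norm _).symm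
      have hsa : star a = -((starRingEnd ℂ) (M i j)) / (r:ℂ) := by
        rw [ha]
        simp [star_div₀, RCLike.star_def, Complex.conj_ofReal]
      have hterm1 : star a * M i j = -(r:ℂ) := by
        rw [hsa, show -((starRingEnd ℂ) (M i j)) / (r:ℂ) * M i j
          = -((starRingEnd ℂ) (M i j) * M i j) / (r:ℂ) by ring, hnorm, sq, neg_div,
          mul_div_assoc, div_self hrne, mul_one]
      have hterm2 : star (1:ℂ) * M j i * a = -(r:ℂ) := by
        rw [star_one, one_mul, hji, ha, RCLike.star_def,
          show (starRingEnd ℂ) (M i j) * (-(M i j) / (r:ℂ))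
          = -((starRingEnd ℂ) (M i j) * M i j) / (r:ℂ) by ring, hnorm, sq, neg_div,
          mul_div_assoc, div_self hrne, mul_one]
      have haa : star a * a = 1 := by
        rw [hsa, ha, show -((starRingEnd ℂ) (M i j)) / (r:ℂ) * (-(M i j) / (r:ℂ))
          = ((starRingEnd ℂ) (M i j) * M i j) / ((r:ℂ) * (r:ℂ)) by ring, hnorm, sq,
          div_self (mul_ne_zero hrne hrne)]
      have key2 : 0 ≤ M i i + M j j - 2*(r:ℂ) := by
        have e : star a * M i i * a + star a * M i j * 1 + star (1:ℂ) * M j i * a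
            + star (1:ℂ) * M j j * 1 = M i i + M j j - 2*(r:ℂ) := by
          rw [hterm1, hterm2]
          rw [show star a * M i i * a = star a * a * M i i by ring, haa]
          simp only [star_one, one_mul, mul_one]
          ring
        rwa [e] at key
      rw [Complex.le_def] at key2
      have h1 := key2.1
      simp only [Complex.zero_re, Complex.sub_re, Complex.add_re, Complex.mul_re,
        Complex.ofReal_re, Complex.ofReal_im] at h1
      norm_num at h1
      linarith

attribute [local instance] Matrix.normedAddCommGroup Matrix.normedSpace

lemma povm_entry_le {d : ℕ} {X : Type} [Fintype X] {f : X → Matrix (Fin d) (Fin d) ℂ}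
    (hf : IsPOVM f) (x : X) (i j : Fin d) : ‖f x i j‖ ≤ 1 := by
  have hdiag : ∀ (k : Fin d), (f x k k).re ≤ 1 := by
    intro k
    have hsum : ∑ x', (f x' k k).re = 1 := by
      have : (∑ x', f x') k k = (1 : Matrix (Fin d) (Fin d) ℂ) k k := by rw [hf.2]
      rw [Matrix.sum_apply] at this
      have := congrArg Complex.re this
      simpa [Complex.re_sum] using this
    have := Finset.single_le_sum (f := fun x' => (f x' k k).re)
      (fun x' _ => by
        have h0 := diag_nonneg (hf.1 x') k
        rw [Complex.le_def] at h0
        simpa using h0.1) (Finset.mem_univ x)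
    rw [hsum] at this
    exact this
  calc ‖f x i j‖ ≤ ((f x i i).re + (f x j j).re) / 2 := entry_bound (hf.1 x) i j
  _ ≤ 1 := by linarith [hdiag i, hdiag j]

lemma isCompact_povm {d : ℕ} {X : Type} [Fintype X] :
    IsCompact {f : X → Matrix (Fin d) (Fin d) ℂ | IsPOVM f} := by
  apply Metric.isCompact_of_isClosed_isBounded
  · have : {f : X → Matrix (Fin d) (Fin d) ℂ | IsPOVM f} =
        (⋂ x : X, {f : X → Matrix (Fin d) (Fin d) ℂ | (f x).PosSemidef}) ∩
          {f : X → Matrix (Fin d) (Fin d) ℂ | ∑ x, f x = 1} := by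
      ext f
      simp only [Set.mem_setOf_eq, Set.mem_inter_iff, Set.mem_iInter]
      exact Iff.rfl
    rw [this]
    refine (isClosed_iInter fun x => isClosed_psd.preimage (continuous_apply x)).inter ?_
    exact isClosed_eq (continuous_finset_sum _ fun x _ => continuous_apply x) continuous_const
  · rw [Metric.isBounded_iff_subset_closedBall 0]
    refine ⟨1, fun f hf => ?_⟩
    rw [Metric.mem_closedBall, dist_zero_right]
    rw [pi_norm_le_iff_of_nonneg zero_le_one]
    intro x
    rw [Matrix.norm_le_iff zero_le_one]
    intro i j
    exact povm_entry_le hf x i j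

variable {d : ℕ} {X Y : Type} [Fintype X] [Fintype Y]

def constraintSet (A : X → Matrix (Fin d) (Fin d) ℂ) (B : Y → Matrix (Fin d) (Fin d) ℂ) :
    Set (ℝ × ((X → Matrix (Fin d) (Fin d) ℂ) × (Y → Matrix (Fin d) (Fin d) ℂ) ×
      (X × Y → Matrix (Fin d) (Fin d) ℂ))) :=
  {p | p.1 ∈ Set.Icc (0:ℝ) 1 ∧ IsPOVM p.2.1 ∧ IsPOVM p.2.2.1 ∧ IsPOVM p.2.2.2 ∧
    (∀ x, (p.1 : ℂ) • A x + ((1 - p.1 : ℝ) : ℂ) • p.2.1 x = ∑ y, p.2.2.2 (x, y)) ∧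
    (∀ y, (p.1 : ℂ) • B y + ((1 - p.1 : ℝ) : ℂ) • p.2.2.1 y = ∑ x, p.2.2.2 (x, y))}

lemma feasible_eq_image (A : X → Matrix (Fin d) (Fin d) ℂ) (B : Y → Matrix (Fin d) (Fin d) ℂ) :
    feasible A B = Prod.fst '' constraintSet A B := by
  ext η
  constructor
  · rintro ⟨hI, C, D, hC, hD, J, hJ, hJX, hJY⟩
    exact ⟨(η, C, D, J), ⟨hI, hC, hD, hJ, fun x => hJX x, fun y => hJY y⟩, rfl⟩
  · rintro ⟨⟨η', C, D, J⟩, ⟨hI, hC, hD, hJ, hJX, hJY⟩, rfl⟩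
    exact ⟨hI, C, D, hC, hD, J, hJ, hJX, hJY⟩

lemma isCompact_constraintSet (A : X → Matrix (Fin d) (Fin d) ℂ)
    (B : Y → Matrix (Fin d) (Fin d) ℂ) : IsCompact (constraintSet A B) := by
  have hsub : constraintSet A B =
      (Set.Icc (0:ℝ) 1 ×ˢ ({f | IsPOVM f} ×ˢ {f | IsPOVM f} ×ˢ {f | IsPOVM f})) ∩
      ((⋂ x : X, {p : ℝ × ((X → Matrix (Fin d) (Fin d) ℂ) × (Y → Matrix (Fin d) (Fin d) ℂ) ×
          (X × Y → Matrix (Fin d) (Fin d) ℂ)) |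
          (p.1 : ℂ) • A x + ((1 - p.1 : ℝ) : ℂ) • p.2.1 x = ∑ y, p.2.2.2 (x, y)}) ∩
       (⋂ y : Y, {p | (p.1 : ℂ) • B y + ((1 - p.1 : ℝ) : ℂ) • p.2.2.1 y = ∑ x, p.2.2.2 (x, y)})) := by
    ext p
    simp only [constraintSet, Set.mem_setOf_eq, Set.mem_inter_iff, Set.mem_prod,
      Set.mem_iInter]
    tauto
  rw [hsub]
  refine ((isCompact_Icc.prod (isCompact_povm.prod (isCompact_povm.prod isCompact_povm))).inter_right ?_)
  have hcoef1 : Continuous fun p : ℝ × ((X → Matrix (Fin d) (Fin d) ℂ) ×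
      (Y → Matrix (Fin d) (Fin d) ℂ) × (X × Y → Matrix (Fin d) (Fin d) ℂ)) => ((p.1 : ℝ) : ℂ) :=
    Complex.continuous_ofReal.comp continuous_fst
  have hcoef2 : Continuous fun p : ℝ × ((X → Matrix (Fin d) (Fin d) ℂ) ×
      (Y → Matrix (Fin d) (Fin d) ℂ) × (X × Y → Matrix (Fin d) (Fin d) ℂ)) =>
      ((1 - p.1 : ℝ) : ℂ) :=
    Complex.continuous_ofReal.comp (continuous_const.sub continuous_fst)
  refine IsClosed.inter (isClosed_iInter fun x => isClosed_eq ?_ ?_)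
    (isClosed_iInter fun y => isClosed_eq ?_ ?_)
  · exact (hcoef1.smul continuous_const).add
      (hcoef2.smul ((continuous_apply x).comp (continuous_fst.comp continuous_snd)))
  · exact continuous_finset_sum _ fun y _ =>
      (continuous_apply (x, y)).comp ((continuous_snd.comp continuous_snd).comp continuous_snd)
  · exact (hcoef1.smul continuous_const).add
      (hcoef2.smul ((continuous_apply y).comp ((continuous_fst.comp continuous_snd).comp continuous_snd)))
  · exact continuous_finset_sum _ fun x _ =>
      (continuous_apply (x, y)).comp ((continuous_snd.comp continuous_snd).comp continuous_snd)

/-- the feasible set of visibilities contains `0` and is exactly the closed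
interval `[0, η^g(A,B)]` where `η^g(A,B)` is its supremum. -/
theorem stmt_9 {d : ℕ} {X Y : Type} [Fintype X] [Fintype Y] [Nonempty X] [Nonempty Y]
    (A : X → Matrix (Fin d) (Fin d) ℂ) (B : Y → Matrix (Fin d) (Fin d) ℂ)
    (hA : IsPOVM A) (hB : IsPOVM B) :
    (0 : ℝ) ∈ feasible A B ∧ feasible A B = Set.Icc 0 (sSup (feasible A B)) := by
  have h0 : (0:ℝ) ∈ feasible A B := zero_mem_feasible A B
  have hcomp : IsCompact (feasible A B) := by
    rw [feasible_eq_image A B]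
    exact (isCompact_constraintSet A B).image continuous_fst
  have hsup : sSup (feasible A B) ∈ feasible A B := hcomp.sSup_mem ⟨0, h0⟩
  refine ⟨h0, ?_⟩
  ext η
  constructor
  · intro h
    exact ⟨h.1.1, le_csSup hcomp.bddAbove h⟩
  · intro h
    exact feasible_down hsup h.1 h.2
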